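/- If a network is generically locally identifiable, i.e. K(G) = (Bᵀ T(G)ᵀ ⊗ C T(G)) I_{E} has full column rank for almost all G, then it is generically decoupled-identifiable, i.e. K̂(G,G') = (Bᵀ T(G')ᵀ ⊗ C T(G)) I_{E} has full column rank for almost all pairs (G,G'). -/

import Mathlib

open Matrix Kronecker MvPolynomial

/-- The matrix supported on the positions `pos` whose nonzero entries are given by `δ`. -/
noncomputable def placeEntries (n m : ℕ) (pos : Fin m → Fin n × Fin n) (δ : Fin m → ℂ) :
    Matrix (Fin n) (Fin n) ℂ :=
  Matrix.of fun i j => ∑ e : Fin m, if pos e = (i, j) then δ e else 0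

/-- The 0/1 selection matrix `I_E` for the vectorized support. -/
noncomputable def selMatrix (n m : ℕ) (pos : Fin m → Fin n × Fin n) :
    Matrix (Fin n × Fin n) (Fin m) ℂ :=
  Matrix.of fun p e => if p = ((pos e).2, (pos e).1) then 1 else 0

lemma aux_exists_minor {m : Type*} [Fintype m] [DecidableEq m] {d : ℕ}
    (A : Matrix m (Fin d) ℂ) (h : A.rank = d) :
    ∃ r : Fin d → m, (A.submatrix r id).det ≠ 0 := by
  classical
  have hT : Aᵀ.rank = d := by rw [Matrix.rank_transpose]; exact h
  rw [Matrix.rank_eq_finrank_span_cols] at hT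
  change Module.finrank ℂ (Submodule.span ℂ (Set.range A)) = d at hT
  have hspan : Submodule.span ℂ (Set.range A) = ⊤ :=
    Submodule.eq_top_of_finrank_eq (by simp [hT])
  obtain ⟨t, hts, hspan', hind⟩ := exists_linearIndependent ℂ (Set.range A)
  have htfin : t.Finite := (Set.finite_range A).subset hts
  haveI : Fintype t := htfin.fintype
  have hb : ⊤ ≤ Submodule.span ℂ (Set.range (Subtype.val : t → (Fin d → ℂ))) := by
    rw [Subtype.range_coe, hspan', hspan]
  let b : Module.Basis t ℂ (Fin d → ℂ) := Module.Basis.mk hind hb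
  have hcard : Fintype.card t = d := by
    have := Module.finrank_eq_card_basis b
    simpa using this.symm
  let e : Fin d ≃ t := (Fintype.equivFinOfCardEq hcard).symm
  have hmem : ∀ k : Fin d, ((e k : Fin d → ℂ)) ∈ Set.range A := fun k => hts (e k).2
  choose r hr using hmem
  refine ⟨r, ?_⟩
  have hrows : LinearIndependent ℂ (fun k : Fin d => (A.submatrix r id) k) := by
    have heq : (fun k : Fin d => (A.submatrix r id) k) = fun k => ((e k : Fin d → ℂ)) := by
      funext k
      have : A (r k) = (e k : Fin d → ℂ) := hr k
      exact this
    rw [heq]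
    exact hind.comp e e.injective
  have hu : IsUnit (A.submatrix r id) := Matrix.linearIndependent_rows_iff_isUnit.mp hrows
  exact ((Matrix.isUnit_iff_isUnit_det _).mp hu).ne_zero

lemma aux_rank_of_minor {m : Type*} [Fintype m] {d : ℕ}
    (A : Matrix m (Fin d) ℂ) (r : Fin d → m) (h : (A.submatrix r id).det ≠ 0) :
    A.rank = d := by
  classical
  refine le_antisymm (by simpa using A.rank_le_card_width) ?_
  have hfac : A.submatrix r id = (Matrix.of fun k i => if r k = i then (1:ℂ) else 0) * A := by
    ext k j
    simp [Matrix.mul_apply]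
  have h1 : (A.submatrix r id).rank = d := by
    have := Matrix.rank_of_isUnit (A.submatrix r id)
      ((Matrix.isUnit_iff_isUnit_det _).mpr (isUnit_iff_ne_zero.mpr h))
    simpa using this
  calc d = (A.submatrix r id).rank := h1.symm
    _ ≤ A.rank := by rw [hfac]; exact Matrix.rank_mul_le_right _ _

/-- If the network is generically locally identifiable (`K(G)` full column rank for almost all
`G`), then it is generically decoupled-identifiable (`K̂(G,G')` full column rank for almost
all `(G,G')`). -/
theorem stmt4 (n nB nC d : ℕ)
    (B : Matrix (Fin n) (Fin nB) ℂ) (C : Matrix (Fin nC) (Fin n) ℂ)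
    (G0 : Matrix (Fin n) (Fin n) ℂ)
    (pos : Fin d → Fin n × Fin n) (hpos : Function.Injective pos)
    (Gfun : (Fin d → ℂ) → Matrix (Fin n) (Fin n) ℂ)
    (hG : ∀ x, Gfun x = G0 + placeEntries n d pos x)
    (hG0 : ∀ i j, (i, j) ∈ Set.range pos → G0 i j = 0)
    (Kb : Matrix (Fin n) (Fin n) ℂ → Matrix (Fin n) (Fin n) ℂ →
      Matrix (Fin nB × Fin nC) (Fin d) ℂ)
    (hKb : ∀ G G', Kb G G' =
      ((Bᵀ * ((1 - G')⁻¹)ᵀ) ⊗ₖ (C * (1 - G)⁻¹)) * selMatrix n d pos)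
    (hloc : ∃ p : MvPolynomial (Fin d) ℂ, p ≠ 0 ∧
      ∀ x : Fin d → ℂ, eval x p ≠ 0 → (Kb (Gfun x) (Gfun x)).rank = d) :
    ∃ q : MvPolynomial (Fin d ⊕ Fin d) ℂ, q ≠ 0 ∧
      ∀ x x' : Fin d → ℂ, eval (Sum.elim x x') q ≠ 0 →
        (Kb (Gfun x) (Gfun x')).rank = d := by
  classical
  obtain ⟨p, hp, hrank⟩ := hloc
  rcases Nat.eq_zero_or_pos d with hd | hd
  · subst hd
    refine ⟨1, one_ne_zero, fun x x' _ => ?_⟩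
    have h1 := (Kb (Gfun x) (Gfun x')).rank_le_card_width
    simp at h1
    omega
  obtain ⟨x₀, hx₀⟩ : ∃ x₀, eval x₀ p ≠ 0 := by
    by_contra hcon
    push_neg at hcon
    exact hp (MvPolynomial.funext fun x => by simpa using hcon x)
  have hr0 := hrank x₀ hx₀
  have hdet0 : (1 - Gfun x₀).det ≠ 0 := by
    intro h0
    have hnu : ¬ IsUnit (1 - Gfun x₀).det := by simp [h0]
    have hz : (1 - Gfun x₀)⁻¹ = 0 := Matrix.nonsing_inv_apply_not_isUnit _ hnu
    rw [hKb, hz] at hr0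
    simp at hr0
    omega
  obtain ⟨r, hrdet⟩ := aux_exists_minor (Kb (Gfun x₀) (Gfun x₀)) hr0
  -- polynomial setup
  set vL : Fin d → MvPolynomial (Fin d ⊕ Fin d) ℂ := fun e => X (Sum.inl e) with hvL
  set vR : Fin d → MvPolynomial (Fin d ⊕ Fin d) ℂ := fun e => X (Sum.inr e) with hvR
  set GP : (Fin d → MvPolynomial (Fin d ⊕ Fin d) ℂ) →
      Matrix (Fin n) (Fin n) (MvPolynomial (Fin d ⊕ Fin d) ℂ) := fun v =>
    G0.map MvPolynomial.C + Matrix.of fun i j => ∑ e, if pos e = (i, j) then v e else 0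
    with hGP
  set MR : Matrix (Fin nB × Fin nC) (Fin d) (MvPolynomial (Fin d ⊕ Fin d) ℂ) :=
    (((B.map MvPolynomial.C)ᵀ * ((1 - GP vR).adjugate)ᵀ) ⊗ₖ
      ((C.map MvPolynomial.C) * (1 - GP vL).adjugate)) * (selMatrix n d pos).map MvPolynomial.C
    with hMR
  have hmap : ∀ (x x' : Fin d → ℂ),
        eval (Sum.elim x x') ((1 - GP vL).det * (1 - GP vR).det * (MR.submatrix r id).det)
        = (1 - Gfun x).det * (1 - Gfun x').det *
          ((((Bᵀ * ((1 - Gfun x').adjugate)ᵀ) ⊗ₖ (C * (1 - Gfun x).adjugate))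
            * selMatrix n d pos).submatrix r id).det := by
      intro x x'
      set ψ : MvPolynomial (Fin d ⊕ Fin d) ℂ →+* ℂ := (eval (Sum.elim x x') : _ →+* ℂ) with hψ
      have hGL : (1 - GP vL).map ψ = 1 - Gfun x := by
        rw [hG]
        ext i j
        simp [hGP, hψ, placeEntries, Matrix.map_apply, Matrix.sub_apply, Matrix.one_apply,
          Matrix.add_apply, map_sum, apply_ite (eval (Sum.elim x x')), hvL]
      have hGR : (1 - GP vR).map ψ = 1 - Gfun x' := by
        rw [hG]
        ext i j
        simp [hGP, hψ, placeEntries, Matrix.map_apply, Matrix.sub_apply, Matrix.one_apply,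
          Matrix.add_apply, map_sum, apply_ite (eval (Sum.elim x x')), hvR]
      have hBm : (B.map MvPolynomial.C).map ψ = B := by
        ext i j; simp [hψ, Matrix.map_apply]
      have hCm : (C.map MvPolynomial.C).map ψ = C := by
        ext i j; simp [hψ, Matrix.map_apply]
      have hSm : ((selMatrix n d pos).map MvPolynomial.C).map ψ = selMatrix n d pos := by
        ext i j
        simp [hψ, Matrix.map_apply, selMatrix, apply_ite (eval (Sum.elim x x'))]
      have hadjL : ((1 - GP vL).adjugate).map ψ = (1 - Gfun x).adjugate := by
        have := RingHom.map_adjugate ψ (1 - GP vL)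
        simp only [RingHom.mapMatrix_apply] at this
        rw [this, hGL]
      have hadjR : ((1 - GP vR).adjugate).map ψ = (1 - Gfun x').adjugate := by
        have := RingHom.map_adjugate ψ (1 - GP vR)
        simp only [RingHom.mapMatrix_apply] at this
        rw [this, hGR]
      have hMRmap : MR.map ψ =
          ((Bᵀ * ((1 - Gfun x').adjugate)ᵀ) ⊗ₖ (C * (1 - Gfun x).adjugate))
            * selMatrix n d pos := by
        rw [hMR]
        erw [Matrix.map_mul (f := ψ)]
        rw [hSm]
        congr 1
        have hk : ∀ (A1 : Matrix (Fin nB) (Fin n) (MvPolynomial (Fin d ⊕ Fin d) ℂ))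
            (A2 : Matrix (Fin nC) (Fin n) (MvPolynomial (Fin d ⊕ Fin d) ℂ)),
            (A1 ⊗ₖ A2).map ψ = (A1.map ψ) ⊗ₖ (A2.map ψ) := by
          intro A1 A2
          ext ⟨i, j⟩ ⟨k, l⟩
          simp [Matrix.kroneckerMap_apply, Matrix.map_apply]
        rw [hk]
        congr 1
        · refine (Matrix.map_mul (f := ψ)).trans ?_
          rw [Matrix.transpose_map, hBm, Matrix.transpose_map, hadjR]
        · refine (Matrix.map_mul (f := ψ)).trans ?_
          rw [hCm, hadjL]
      have hsub : ((MR.submatrix r id).map ψ) = (MR.map ψ).submatrix r id := rfl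
      rw [_root_.map_mul, _root_.map_mul, RingHom.map_det, RingHom.map_det, RingHom.map_det]
      simp only [RingHom.mapMatrix_apply]
      rw [hGL, hGR, hsub, hMRmap]
  have hrel : ∀ (x x' : Fin d → ℂ), (1 - Gfun x).det ≠ 0 → (1 - Gfun x').det ≠ 0 →
      ((((Bᵀ * ((1 - Gfun x').adjugate)ᵀ) ⊗ₖ (C * (1 - Gfun x).adjugate))
        * selMatrix n d pos).submatrix r id).det
      = ((1 - Gfun x').det * (1 - Gfun x).det) ^ d *
        ((Kb (Gfun x) (Gfun x')).submatrix r id).det := by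
    intro x x' hx hx'
    have hadj : ∀ (A : Matrix (Fin n) (Fin n) ℂ), A.det ≠ 0 → A.adjugate = A.det • A⁻¹ := by
      intro A hA
      rw [Matrix.inv_def, smul_smul, Ring.inverse_eq_inv', mul_inv_cancel₀ hA, one_smul]
    rw [hadj _ hx, hadj _ hx', hKb]
    rw [Matrix.transpose_smul, Matrix.mul_smul, Matrix.mul_smul, Matrix.smul_kronecker,
      Matrix.kronecker_smul, smul_smul, Matrix.smul_mul]
    have : ((((1 - Gfun x').det * (1 - Gfun x).det) •
        (((Bᵀ * ((1 - Gfun x')⁻¹)ᵀ) ⊗ₖ (C * (1 - Gfun x)⁻¹)) * selMatrix n d pos)).submatrix r id)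
        = ((1 - Gfun x').det * (1 - Gfun x).det) •
          ((((Bᵀ * ((1 - Gfun x')⁻¹)ᵀ) ⊗ₖ (C * (1 - Gfun x)⁻¹)) * selMatrix n d pos).submatrix r id) := rfl
    rw [this, Matrix.det_smul]
    simp
  refine ⟨(1 - GP vL).det * (1 - GP vR).det * (MR.submatrix r id).det, ?_, ?_⟩
  · -- q ≠ 0
    intro hq0
    have hev := hmap x₀ x₀
    rw [hq0, map_zero] at hev
    have h3 := hrel x₀ x₀ hdet0 hdet0
    rw [h3] at hev
    have : ((1 - Gfun x₀).det * (1 - Gfun x₀).det) ^ d ≠ 0 := pow_ne_zero _ (mul_ne_zero hdet0 hdet0)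
    exact (mul_ne_zero (mul_ne_zero hdet0 hdet0) (mul_ne_zero this hrdet)) hev.symm
  · -- usage
    intro x x' hq
    rw [hmap x x'] at hq
    have h1 : (1 - Gfun x).det ≠ 0 := fun h => hq (by rw [h]; ring)
    have h2 : (1 - Gfun x').det ≠ 0 := fun h => hq (by rw [h]; ring)
    rw [hrel x x' h1 h2] at hq
    have h3 : ((Kb (Gfun x) (Gfun x')).submatrix r id).det ≠ 0 := by
      intro h
      exact hq (by rw [h]; ring)
    exact aux_rank_of_minor _ r h3
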